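/- Every layer point of the Vietoris–Rips hierarchy Γ₀(X) is a branch point of Γ₀(X); hence for k = 0 the branch points and the layer points coincide. -/

import Mathlib

variable {Z : Type*} [MetricSpace Z]

/-- Vertex set `V_{s,k}(X)` of the degree-Rips complex: points of `X` having at
least `k` other points of `X` within distance `s`. -/
def drVertex (X : Set Z) (k : ℕ) (s : ℝ) : Set Z :=
  {x ∈ X | k ≤ {y ∈ X | y ≠ x ∧ dist x y ≤ s}.ncard}

/-- The generating relation for components: two vertices at distance at most `s`. -/
def drStep (X : Set Z) (k : ℕ) (s : ℝ) (x y : Z) : Prop :=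
  x ∈ drVertex X k s ∧ y ∈ drVertex X k s ∧ dist x y ≤ s

/-- `C` is a degree-Rips component (an element of `π₀ L_{s,k}(X)`): the class of
some vertex `x` under the equivalence relation generated by `drStep`. -/
def drComp (X : Set Z) (k : ℕ) (s : ℝ) (C : Set Z) : Prop :=
  ∃ x ∈ drVertex X k s, C = {y | Relation.ReflTransGen (drStep X k s) x y}

/-- `(t, C)` is a layer point of `Γ_k(X)`: it is an element of the hierarchy, and
every element `(s, D) ≤ (t, C)` with `s < t` has `D` a proper subset of `C`. -/
def IsLayer (X : Set Z) (k : ℕ) (t : ℝ) (C : Set Z) : Prop :=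
  0 ≤ t ∧ drComp X k t C ∧
    ∀ s D, 0 ≤ s → drComp X k s D → s < t → D ⊆ C → D ⊂ C

/-- `(t, C)` is a branch point of `Γ_k(X)`. -/
def IsBranch (X : Set Z) (k : ℕ) (t : ℝ) (C : Set Z) : Prop :=
  0 ≤ t ∧ drComp X k t C ∧
    ((∀ s D, 0 ≤ s → drComp X k s D → s < t → ¬D ⊆ C) ∨
      ∃ s₀, s₀ < t ∧ ∀ s, s₀ ≤ s → s < t →
        ∃ D₁ D₂, drComp X k s D₁ ∧ drComp X k s D₂ ∧ D₁ ≠ D₂ ∧ D₁ ⊆ C ∧ D₂ ⊆ C)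

/-- `(t, D)` is the maximal layer point below the element `(u, C)` of `Γ_k(X)`:
it is a layer point, `(t, D) ≤ (u, C)`, and every layer point below `(u, C)`
is below `(t, D)`. -/
def IsMaxLayerBelow (X : Set Z) (k : ℕ) (u : ℝ) (C : Set Z) (t : ℝ) (D : Set Z) : Prop :=
  IsLayer X k t D ∧ t ≤ u ∧ D ⊆ C ∧
    ∀ t' D', IsLayer X k t' D' → t' ≤ u → D' ⊆ C → t' ≤ t ∧ D' ⊆ D

/-- `t` is a layer parameter of `X`. -/
def IsLayerParam (X : Set Z) (k : ℕ) (t : ℝ) : Prop :=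
  ∃ C, IsLayer X k t C

/-- A stability map `θ : Y → X` (encoded as a map `Z → Z` carrying `Y` into `X`). -/
def IsStabilityMap (X Y : Set Z) (k : ℕ) (r : ℝ) (θ : Z → Z) : Prop :=
  (∀ y ∈ Y, θ y ∈ X) ∧
    ∀ s : ℝ, 0 ≤ s →
      (∀ y₁ y₂, y₁ ∈ drVertex Y k s → y₂ ∈ drVertex Y k s → dist y₁ y₂ ≤ s →
          θ y₁ ∈ drVertex X k (s + 2 * r) ∧ θ y₂ ∈ drVertex X k (s + 2 * r) ∧
          dist (θ y₁) (θ y₂) ≤ s + 2 * r) ∧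
      (∀ x ∈ drVertex X k s, ∃ C, drComp X k (s + 2 * r) C ∧ x ∈ C ∧ θ x ∈ C) ∧
      (∀ y ∈ drVertex Y k s, ∃ D, drComp Y k (s + 2 * r) D ∧ y ∈ D ∧ θ y ∈ D)

/-- Vertices of the degree-Rips complex at scale infinity: points with at least
`k` other points. -/
def drVertexInf (W : Set Z) (k : ℕ) : Set Z :=
  {w ∈ W | k ≤ {w' ∈ W | w' ≠ w}.ncard}

/-- Phase change numbers: distances between distinct vertices at scale infinity. -/
def IsPhaseChange (W : Set Z) (k : ℕ) (t : ℝ) : Prop :=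
  ∃ w₁ ∈ drVertexInf W k, ∃ w₂ ∈ drVertexInf W k, w₁ ≠ w₂ ∧ t = dist w₁ w₂

lemma mem_drVertex_zero {X : Set Z} {s : ℝ} {x : Z} : x ∈ drVertex X 0 s ↔ x ∈ X := by
  simp [drVertex]

lemma reflTransGen_mono_zero {X : Set Z} {s t : ℝ} (hst : s ≤ t) {x y : Z}
    (h : Relation.ReflTransGen (drStep X 0 s) x y) :
    Relation.ReflTransGen (drStep X 0 t) x y := by
  refine Relation.ReflTransGen.mono ?_ _ _ h
  rintro a b ⟨ha, hb, hd⟩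
  exact ⟨mem_drVertex_zero.mpr (mem_drVertex_zero.mp ha),
    mem_drVertex_zero.mpr (mem_drVertex_zero.mp hb), hd.trans hst⟩

lemma mem_X_of_reflTransGen {X : Set Z} {t : ℝ} {x y : Z} (hx : x ∈ X)
    (h : Relation.ReflTransGen (drStep X 0 t) x y) : y ∈ X := by
  induction h with
  | refl => exact hx
  | tail _ hstep _ => exact mem_drVertex_zero.mp hstep.2.1

/-- every layer point of the Vietoris–Rips hierarchy `Γ₀(X)`
(the case `k = 0`) is a branch point, so for `k = 0` branch points and layer
points coincide. -/
theorem layer_point_is_branch_point_VR (X : Set Z) (hXfin : X.Finite)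
    (t : ℝ) (C : Set Z) (h : IsLayer X 0 t C) : IsBranch X 0 t C := by
  obtain ⟨ht0, hC, hlayer⟩ := h
  refine ⟨ht0, hC, ?_⟩
  obtain ⟨x, hxV, rfl⟩ := hC
  rcases eq_or_lt_of_le ht0 with heq | hpos
  · left; intro s D hs _ hst _; linarith
  · right
    refine ⟨0, hpos, fun s hs0 hst => ?_⟩
    have hxX : x ∈ X := mem_drVertex_zero.mp hxV
    have hD1comp : drComp X 0 s {y | Relation.ReflTransGen (drStep X 0 s) x y} :=
      ⟨x, mem_drVertex_zero.mpr hxX, rfl⟩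
    have hD1sub : {y | Relation.ReflTransGen (drStep X 0 s) x y} ⊆
        {y | Relation.ReflTransGen (drStep X 0 t) x y} :=
      fun y hy => reflTransGen_mono_zero hst.le hy
    have hssub := hlayer s _ hs0 hD1comp hst hD1sub
    obtain ⟨y, hyC, hyD⟩ := Set.exists_of_ssubset hssub
    refine ⟨_, {z | Relation.ReflTransGen (drStep X 0 s) y z}, hD1comp,
      ⟨y, mem_drVertex_zero.mpr (mem_X_of_reflTransGen hxX hyC), rfl⟩, ?_, hD1sub, ?_⟩
    · intro hEq
      rw [hEq] at hyD
      exact hyD Relation.ReflTransGen.refl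
    · intro z hz
      exact Relation.ReflTransGen.trans hyC (reflTransGen_mono_zero hst.le hz)
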